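/- Let K ≥ 1 and m ∈ {1,…,K} be integers. The sequence c(n) := (C(K,n+1) − C(K−m,n+1)) / C(K,n), defined for n ∈ {0,1,…,K}, is discretely convex: c(n−1) + c(n+1) ≥ 2·c(n) for every n ∈ {1,…,K−1}. -/

import Mathlib

/-- Telescoping: C(K,n+1) = C(K-m,n+1) + Σ_{l=1}^m C(K-l,n). -/
lemma tele (K : ℕ) : ∀ m, m ≤ K → ∀ n,
    K.choose (n + 1) = (K - m).choose (n + 1) + ∑ l ∈ Finset.Icc 1 m, (K - l).choose n := by
  intro m
  induction m with
  | zero => simp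
  | succ m ih =>
    intro hm n
    rw [Finset.sum_Icc_succ_top (by omega : 1 ≤ m + 1)]
    have h1 : K - m = (K - (m + 1)) + 1 := by omega
    have := ih (by omega) n
    rw [this, h1, Nat.choose_succ_succ]
    simp only [Nat.succ_eq_add_one]
    omega

/-- Trinomial identity. -/
lemma trinom (K l n : ℕ) (hn : n ≤ K) (hl : l ≤ K) :
    K.choose n * (K - n).choose l = K.choose l * (K - l).choose n := by
  by_cases h : n + l ≤ K
  · have h1 := Nat.choose_mul (n := K) (show l ≤ n + l by omega)
    have h2 := Nat.choose_mul (n := K) (show n ≤ n + l by omega)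
    rw [show n + l - l = n by omega] at h1
    rw [show n + l - n = l by omega] at h2
    have hs : (n + l).choose l = (n + l).choose n := by
      rw [← Nat.choose_symm (show l ≤ n + l by omega)]
      congr 1
      omega
    rw [hs] at h1
    omega
  · rw [Nat.choose_eq_zero_of_lt (show K - n < l by omega),
      Nat.choose_eq_zero_of_lt (show K - l < n by omega)]
    simp

/-- Discrete convexity of j ↦ C(j, l+1). -/
lemma convnat (j l : ℕ) : 2 * (j + 1).choose (l + 1) ≤ (j + 2).choose (l + 1) + j.choose (l + 1) := by
  have hp1 : (j + 2).choose (l + 1) = (j + 1).choose l + (j + 1).choose (l + 1) :=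
    Nat.choose_succ_succ _ _
  have hp2 : (j + 1).choose (l + 1) = j.choose l + j.choose (l + 1) :=
    Nat.choose_succ_succ _ _
  have hm : j.choose l ≤ (j + 1).choose l := Nat.choose_le_choose l (by omega)
  omega

/-- Discrete convexity of the normalized coded-caching load
c(n) = (C(K,n+1) − C(K−m,n+1))/C(K,n) on {0,…,K}. -/
theorem stmt9 (K m : ℕ) (hK : 1 ≤ K) (hm1 : 1 ≤ m) (hmK : m ≤ K)
    (c : ℕ → ℝ)
    (hc : ∀ n, c n = ((K.choose (n + 1) : ℝ) - ((K - m).choose (n + 1) : ℝ)) /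
      (K.choose n : ℝ)) :
    ∀ n ∈ Finset.Icc 1 (K - 1), c (n - 1) + c (n + 1) ≥ 2 * c n := by
  have key : ∀ t, t ≤ K →
      c t = ∑ l ∈ Finset.Icc 1 m, ((K - t).choose l : ℝ) / (K.choose l : ℝ) := by
    intro t ht
    rw [hc]
    have htel := tele K m hmK t
    have hnum : ((K.choose (t + 1) : ℝ) - ((K - m).choose (t + 1) : ℝ))
        = ∑ l ∈ Finset.Icc 1 m, ((K - l).choose t : ℝ) := by
      have : ((K.choose (t + 1) : ℝ)) = ((K - m).choose (t + 1) : ℝ)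
          + ∑ l ∈ Finset.Icc 1 m, ((K - l).choose t : ℝ) := by
        rw [htel]; push_cast; ring
      linarith
    rw [hnum, Finset.sum_div]
    apply Finset.sum_congr rfl
    intro l hl
    simp only [Finset.mem_Icc] at hl
    have hlK : l ≤ K := le_trans hl.2 hmK
    have hKt : 0 < (K.choose t : ℝ) := by exact_mod_cast Nat.choose_pos ht
    have hKl : 0 < (K.choose l : ℝ) := by exact_mod_cast Nat.choose_pos hlK
    rw [div_eq_div_iff hKt.ne' hKl.ne']
    have := trinom K l t ht hlK
    have : (K.choose t : ℝ) * ((K - t).choose l : ℝ)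
        = (K.choose l : ℝ) * ((K - l).choose t : ℝ) := by exact_mod_cast this
    linarith
  intro n hn
  simp only [Finset.mem_Icc] at hn
  obtain ⟨h1, h2⟩ := hn
  have hn1 : n + 1 ≤ K := by omega
  rw [key (n - 1) (by omega), key (n + 1) (by omega), key n (by omega),
    Finset.mul_sum, ← Finset.sum_add_distrib]
  apply Finset.sum_le_sum
  intro l hl
  simp only [Finset.mem_Icc] at hl
  obtain ⟨l, rfl⟩ : ∃ l', l = l' + 1 := ⟨l - 1, by omega⟩
  have hj1 : K - (n - 1) = (K - (n + 1)) + 2 := by omega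
  have hj2 : K - n = (K - (n + 1)) + 1 := by omega
  set j := K - (n + 1)
  rw [hj1, hj2]
  have hKl : 0 < (K.choose (l + 1) : ℝ) := by
    exact_mod_cast Nat.choose_pos (show l + 1 ≤ K by omega)
  rw [← add_div, ← mul_div_assoc]
  have hnat := convnat j l
  have : (2 * (j + 1).choose (l + 1) : ℝ) ≤ ((j + 2).choose (l + 1) : ℝ) + (j.choose (l + 1) : ℝ) := by
    exact_mod_cast hnat
  exact div_le_div_of_nonneg_right this hKl.le
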